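/- Let |φ⟩ be a unit vector written as |φ⟩ = √(1−α)|u⟩ + √α|v⟩ with |u⟩, |v⟩ orthogonal unit vectors, and let U, U' be unitaries with U|u⟩ = U'|u⟩. Then the trace-norm distance ‖U|φ⟩⟨φ|U† − U'|φ⟩⟨φ|U'†‖₁ ≤ 2(α + 2√(α(1−α))) ≤ 6√α. -/

import Mathlib

open Matrix
open scoped ComplexOrder

/-- The trace (Schatten-1) norm of a complex matrix: the sum of its singular
values, i.e. of the square roots of the eigenvalues of `AᴴA`. -/
noncomputable def traceNorm {n : Type*} [Fintype n] [DecidableEq n]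
    (A : Matrix n n ℂ) : ℝ :=
  ∑ i, Real.sqrt ((Matrix.posSemidef_conjTranspose_mul_self A).1.eigenvalues i)

section Helpers

set_option linter.unusedSectionVars false
set_option linter.unusedVariables false

open scoped MatrixOrder

variable {n : Type*} [Fintype n] [DecidableEq n]


lemma trace_conj_unitary (Q : Matrix n n ℂ) (hQ : Q ∈ Matrix.unitaryGroup n ℂ)
    (B : Matrix n n ℂ) : (Q * B * Qᴴ).trace = B.trace := by
  rw [trace_mul_cycle, ← Matrix.star_eq_conjTranspose,
    (Matrix.mem_unitaryGroup_iff').mp hQ, one_mul]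


lemma traceNorm_eq_re_trace_sqrt (A : Matrix n n ℂ) :
    traceNorm A = Complex.re ((CFC.sqrt (Aᴴ * A)).trace) := by
  rw [CFC.sqrt_eq_real_sqrt (Aᴴ * A) (Matrix.posSemidef_conjTranspose_mul_self A).nonneg,
    cfcₙ_eq_cfc, (Matrix.posSemidef_conjTranspose_mul_self A).1.cfc_eq, IsHermitian.cfc,
    Unitary.conjStarAlgAut_apply, Matrix.star_eq_conjTranspose,
    trace_conj_unitary _ (Matrix.posSemidef_conjTranspose_mul_self A).1.eigenvectorUnitary.2,
    trace_diagonal]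
  simp [traceNorm]

lemma traceNorm_eq_of_decomp {A : Matrix n n ℂ} (Q : Matrix n n ℂ)
    (hQ : Q ∈ Matrix.unitaryGroup n ℂ) (d : n → ℝ) (hd : ∀ i, 0 ≤ d i)
    (h : Aᴴ * A = Q * Matrix.diagonal (fun i => (d i : ℂ)) * Qᴴ) :
    traceNorm A = ∑ i, Real.sqrt (d i) := by
  set S : Matrix n n ℂ := Q * Matrix.diagonal (fun i => (Real.sqrt (d i) : ℂ)) * Qᴴ with hS
  have hSps : S.PosSemidef := by
    apply Matrix.PosSemidef.mul_mul_conjTranspose_same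
    refine Matrix.posSemidef_diagonal_iff.mpr fun i => ?_
    exact_mod_cast Complex.zero_le_real.mpr (Real.sqrt_nonneg _)
  have hsq : S ^ 2 = Aᴴ * A := by
    rw [h, pow_two, hS]
    have h1 : Qᴴ * Q = 1 := (Matrix.mem_unitaryGroup_iff').mp hQ
    have hdd : Matrix.diagonal (fun i => (Real.sqrt (d i) : ℂ)) *
        Matrix.diagonal (fun i => (Real.sqrt (d i) : ℂ)) =
        Matrix.diagonal (fun i => (d i : ℂ)) := by
      rw [Matrix.diagonal_mul_diagonal]
      have : (fun i => (Real.sqrt (d i) : ℂ) * (Real.sqrt (d i) : ℂ)) = fun i => (d i : ℂ) := by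
        funext i
        rw [← Complex.ofReal_mul, Real.mul_self_sqrt (hd i)]
      rw [this]
    simp only [mul_assoc]
    rw [← mul_assoc Qᴴ Q, h1, one_mul, ← mul_assoc _ (Matrix.diagonal _) Qᴴ, hdd]
  have := (CFC.sqrt_unique (a := Aᴴ * A) ((pow_two S).symm.trans hsq) hSps.nonneg).symm
  rw [traceNorm_eq_re_trace_sqrt, ← this, hS, trace_conj_unitary _ hQ, trace_diagonal]
  simp

lemma sum_eigenvalues_eq_re_trace {B : Matrix n n ℂ} (hB : B.IsHermitian) :
    ∑ i, hB.eigenvalues i = B.trace.re := by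
  conv_rhs => rw [hB.spectral_theorem]
  rw [Unitary.conjStarAlgAut_apply, Matrix.star_eq_conjTranspose,
    trace_conj_unitary _ hB.eigenvectorUnitary.2, trace_diagonal]
  simp

lemma star_dotProduct_self (x : n → ℂ) :
    star x ⬝ᵥ x = ((∑ i, Complex.normSq (x i) : ℝ) : ℂ) := by
  simp [dotProduct, Complex.normSq_eq_conj_mul_self]

lemma rank_vecMulVec_le' (x y : n → ℂ) : (vecMulVec x y).rank ≤ 1 := by
  rw [vecMulVec_eq Unit]
  exact le_trans (Matrix.rank_mul_le_left _ _) ((Matrix.rank_le_card_width _).trans_eq Fintype.card_unit)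

lemma traceNorm_vecMulVec_le (x y : n → ℂ) :
    traceNorm (vecMulVec x (star y)) ≤
      Real.sqrt ((star x ⬝ᵥ x).re) * Real.sqrt ((star y ⬝ᵥ y).re) := by
  set A := vecMulVec x (star y) with hA
  have hM := Matrix.posSemidef_conjTranspose_mul_self A
  have hnn : ∀ i, 0 ≤ hM.1.eigenvalues i := hM.eigenvalues_nonneg
  -- number of nonzero eigenvalues is at most 1
  have hcard : Fintype.card {i // hM.1.eigenvalues i ≠ 0} ≤ 1 := by
    rw [← hM.1.rank_eq_card_non_zero_eigs, Matrix.rank_conjTranspose_mul_self]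
    exact rank_vecMulVec_le' _ _
  -- trace computation
  have htr : (Aᴴ * A).trace = (star x ⬝ᵥ x) * (star y ⬝ᵥ y) := by
    simp only [trace, diag, mul_apply, conjTranspose_apply, hA, vecMulVec_apply,
      Pi.star_apply, dotProduct, star_mul', star_star]
    rw [Finset.sum_comm, Finset.sum_mul_sum]
    refine Finset.sum_congr rfl fun i _ => ?_
    exact Finset.sum_congr rfl fun j _ => by ring
  have hsum : ∑ i, hM.1.eigenvalues i = ((star x ⬝ᵥ x).re) * ((star y ⬝ᵥ y).re) := by
    rw [sum_eigenvalues_eq_re_trace hM.1, htr, star_dotProduct_self, star_dotProduct_self,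
      ← Complex.ofReal_mul]
    simp
  have hxnn : 0 ≤ (star x ⬝ᵥ x).re := by rw [star_dotProduct_self]; simpa using Finset.sum_nonneg (fun i _ => Complex.normSq_nonneg (x i))
  have hynn : 0 ≤ (star y ⬝ᵥ y).re := by rw [star_dotProduct_self]; simpa using Finset.sum_nonneg (fun i _ => Complex.normSq_nonneg (y i))
  rw [← Real.sqrt_mul hxnn]
  by_cases hz : ∀ i, hM.1.eigenvalues i = 0
  · have : traceNorm A = 0 := by
      unfold traceNorm
      rw [Finset.sum_eq_zero]
      intro i _
      rw [hz i, Real.sqrt_zero]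
    rw [this]; exact Real.sqrt_nonneg _
  · push_neg at hz
    obtain ⟨j, hj⟩ := hz
    have hzero : ∀ i, i ≠ j → hM.1.eigenvalues i = 0 := by
      intro i hij
      by_contra hi
      exact hij (congrArg Subtype.val (Fintype.card_le_one_iff.mp hcard ⟨i, hi⟩ ⟨j, hj⟩))
    have : traceNorm A = Real.sqrt (hM.1.eigenvalues j) := by
      unfold traceNorm
      rw [Finset.sum_eq_single j]
      · intro i _ hij; rw [hzero i hij, Real.sqrt_zero]
      · intro h; exact absurd (Finset.mem_univ j) h
    rw [this]
    apply Real.sqrt_le_sqrt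
    rw [← hsum]
    exact Finset.single_le_sum (fun i _ => hnn i) (Finset.mem_univ j)

lemma re_dotProduct_le_sqrt (x z : n → ℂ) :
    (star x ⬝ᵥ z).re ≤ Real.sqrt ((star x ⬝ᵥ x).re) * Real.sqrt ((star z ⬝ᵥ z).re) := by
  let x' : EuclideanSpace ℂ n := (WithLp.equiv 2 (n → ℂ)).symm x
  let z' : EuclideanSpace ℂ n := (WithLp.equiv 2 (n → ℂ)).symm z
  have h1 : (star x ⬝ᵥ z) = inner ℂ x' z' := by rw [dotProduct_comm]; rfl
  have h2 : (star x ⬝ᵥ x) = inner ℂ x' x' := by rw [dotProduct_comm]; rfl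
  have h3 : (star z ⬝ᵥ z) = inner ℂ z' z' := by rw [dotProduct_comm]; rfl
  rw [h1, h2, h3]
  have h := re_inner_le_norm (𝕜 := ℂ) x' z'
  rw [norm_eq_sqrt_re_inner (𝕜 := ℂ), norm_eq_sqrt_re_inner (𝕜 := ℂ)] at h
  simpa only [RCLike.re_to_complex] using h

lemma conj_apply_diag (B Q : Matrix n n ℂ) (i : n) :
    (Qᴴ * B * Q) i i = star (fun k => Q k i) ⬝ᵥ (B *ᵥ fun k => Q k i) := by
  simp only [mul_apply, conjTranspose_apply, mulVec, dotProduct, Pi.star_apply,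
    Finset.sum_mul, Finset.mul_sum]
  rw [Finset.sum_comm]
  refine Finset.sum_congr rfl fun k _ => Finset.sum_congr rfl fun l _ => by ring

lemma re_trace_unitary_mul_le (A V : Matrix n n ℂ) (hV : V ∈ Matrix.unitaryGroup n ℂ) :
    (trace (Vᴴ * A)).re ≤ traceNorm A := by
  have hM := Matrix.posSemidef_conjTranspose_mul_self A
  set Q : Matrix n n ℂ := (hM.1.eigenvectorUnitary : Matrix n n ℂ) with hQdef
  have hQ : Q ∈ Matrix.unitaryGroup n ℂ := hM.1.eigenvectorUnitary.2
  have hQ1 : Qᴴ * Q = 1 := (Matrix.mem_unitaryGroup_iff').mp hQ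
  have hV1 : Vᴴ * V = 1 := (Matrix.mem_unitaryGroup_iff').mp hV
  -- trace invariance
  have htr : trace (Vᴴ * A) = trace (Qᴴ * (Vᴴ * A) * Q) := by
    have := trace_conj_unitary Qᴴ (by rw [← Matrix.star_eq_conjTranspose]; exact Unitary.star_mem hQ) (Vᴴ * A)
    rw [conjTranspose_conjTranspose] at this
    rw [this]
  rw [htr, trace]
  have key : ∀ i, ((Qᴴ * (Vᴴ * A) * Q).diag i).re ≤ Real.sqrt (hM.1.eigenvalues i) := by
    intro i
    set p : n → ℂ := fun k => Q k i with hp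
    have hdiag : (Qᴴ * (Vᴴ * A) * Q) i i = star (V *ᵥ p) ⬝ᵥ (A *ᵥ p) := by
      rw [conj_apply_diag, ← hp, ← Matrix.mulVec_mulVec, Matrix.dotProduct_mulVec,
        ← Matrix.star_mulVec]
    have hpp : star p ⬝ᵥ p = 1 := by
      have := congrFun (congrFun hQ1 i) i
      simpa [mul_apply, conjTranspose_apply, one_apply, dotProduct, hp] using this
    have hVp : star (V *ᵥ p) ⬝ᵥ (V *ᵥ p) = 1 := by
      rw [Matrix.star_mulVec, ← Matrix.dotProduct_mulVec, Matrix.mulVec_mulVec, hV1,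
        Matrix.one_mulVec, hpp]
    have hAp : star (A *ᵥ p) ⬝ᵥ (A *ᵥ p) = (hM.1.eigenvalues i : ℂ) := by
      rw [Matrix.star_mulVec, ← Matrix.dotProduct_mulVec, Matrix.mulVec_mulVec]
      have hpe : p = ⇑(hM.1.eigenvectorBasis i) := by
        funext k; rw [hp, hQdef]; exact hM.1.eigenvectorUnitary_apply k i
      rw [hpe, hM.1.mulVec_eigenvectorBasis, dotProduct_smul, ← hpe,
        Complex.real_smul, hpp, mul_one]
    rw [Matrix.diag_apply, hdiag]
    calc (star (V *ᵥ p) ⬝ᵥ (A *ᵥ p)).re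
        ≤ Real.sqrt ((star (V *ᵥ p) ⬝ᵥ (V *ᵥ p)).re) * Real.sqrt ((star (A *ᵥ p) ⬝ᵥ (A *ᵥ p)).re) :=
          re_dotProduct_le_sqrt _ _
      _ = Real.sqrt (hM.1.eigenvalues i) := by
          rw [hVp, hAp]; simp
  calc (∑ i, (Qᴴ * (Vᴴ * A) * Q).diag i).re
      = ∑ i, ((Qᴴ * (Vᴴ * A) * Q).diag i).re := by rw [Complex.re_sum]
    _ ≤ ∑ i, Real.sqrt (hM.1.eigenvalues i) := Finset.sum_le_sum (fun i _ => key i)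
    _ = traceNorm A := rfl

lemma exists_unitary_traceNorm_le {C : Matrix n n ℂ} (hC : C.IsHermitian) :
    ∃ V ∈ Matrix.unitaryGroup n ℂ, traceNorm C ≤ ((Vᴴ * C).trace).re := by
  set Q : Matrix n n ℂ := (hC.eigenvectorUnitary : Matrix n n ℂ) with hQdef
  have hQ : Q ∈ Matrix.unitaryGroup n ℂ := hC.eigenvectorUnitary.2
  have hQ1 : Qᴴ * Q = 1 := (Matrix.mem_unitaryGroup_iff').mp hQ
  set μ := hC.eigenvalues with hμ
  set s : n → ℂ := fun i => if 0 ≤ μ i then 1 else -1 with hs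
  have hsdiag : Matrix.diagonal s ∈ Matrix.unitaryGroup n ℂ := by
    rw [Matrix.mem_unitaryGroup_iff, Matrix.star_eq_conjTranspose, Matrix.diagonal_conjTranspose,
      Matrix.diagonal_mul_diagonal]
    convert Matrix.diagonal_one using 2
    funext i
    by_cases h : 0 ≤ μ i <;> simp [hs, h]
  refine ⟨Q * Matrix.diagonal s * Qᴴ, ?_, ?_⟩
  · rw [← Matrix.star_eq_conjTranspose]
    exact mul_mem (mul_mem hQ hsdiag) (Unitary.star_mem hQ)
  · have hspec : C = Q * Matrix.diagonal (fun i => (μ i : ℂ)) * Qᴴ := by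
      conv_lhs => rw [hC.spectral_theorem]
      rw [Unitary.conjStarAlgAut_apply, Matrix.star_eq_conjTranspose]
      rfl
    have hVC : (Q * Matrix.diagonal s * Qᴴ)ᴴ * C
        = Q * Matrix.diagonal (fun i => star (s i) * (μ i : ℂ)) * Qᴴ := by
      rw [hspec]
      rw [Matrix.conjTranspose_mul, Matrix.conjTranspose_mul, Matrix.conjTranspose_conjTranspose,
        Matrix.diagonal_conjTranspose]
      simp only [mul_assoc]
      rw [← mul_assoc Qᴴ Q, hQ1, one_mul, ← mul_assoc (Matrix.diagonal (star s)),
        Matrix.diagonal_mul_diagonal]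
      rfl
    have habs : ∀ i, star (s i) * (μ i : ℂ) = (|μ i| : ℝ) := by
      intro i
      by_cases h : 0 ≤ μ i
      · simp [hs, h, abs_of_nonneg h]
      · push_neg at h
        simp [hs, not_le.mpr h, abs_of_neg h]
    have htrace : (((Q * Matrix.diagonal s * Qᴴ)ᴴ * C).trace).re = ∑ i, |μ i| := by
      rw [hVC, trace_conj_unitary _ hQ, trace_diagonal]
      rw [Complex.re_sum]
      refine Finset.sum_congr rfl fun i _ => ?_
      rw [habs i]
      simp
    rw [htrace]
    have hCC : Cᴴ * C = Q * Matrix.diagonal (fun i => ((μ i ^ 2 : ℝ) : ℂ)) * Qᴴ := by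
      rw [hC.eq]
      conv_lhs => rw [hspec]
      simp only [mul_assoc]
      rw [← mul_assoc Qᴴ Q, hQ1, one_mul, ← mul_assoc (Matrix.diagonal _) (Matrix.diagonal _),
        Matrix.diagonal_mul_diagonal]
      congr 2
      funext i
      push_cast
      ring
    rw [traceNorm_eq_of_decomp Q hQ _ (fun i => sq_nonneg (μ i)) hCC]
    refine le_of_eq (Finset.sum_congr rfl fun i _ => ?_)
    rw [Real.sqrt_sq_eq_abs]

lemma traceNorm_add4_le {A1 A2 A3 A4 : Matrix n n ℂ} (h : (A1 + A2 + A3 + A4).IsHermitian) :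
    traceNorm (A1 + A2 + A3 + A4)
      ≤ traceNorm A1 + traceNorm A2 + traceNorm A3 + traceNorm A4 := by
  obtain ⟨V, hV, hle⟩ := exists_unitary_traceNorm_le h
  refine hle.trans ?_
  rw [mul_add, mul_add, mul_add, trace_add, trace_add, trace_add]
  simp only [Complex.add_re]
  exact add_le_add (add_le_add (add_le_add (re_trace_unitary_mul_le _ _ hV)
    (re_trace_unitary_mul_le _ _ hV)) (re_trace_unitary_mul_le _ _ hV))
    (re_trace_unitary_mul_le _ _ hV)

lemma conj_vecMulVec (U : Matrix n n ℂ) (φ : n → ℂ) :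
    U * vecMulVec φ (star φ) * Uᴴ = vecMulVec (U *ᵥ φ) (star (U *ᵥ φ)) := by
  ext i j
  simp only [mul_apply, conjTranspose_apply, vecMulVec_apply, Pi.star_apply, mulVec, dotProduct,
    Finset.sum_mul, Finset.mul_sum, star_sum, star_mul']
  refine Finset.sum_congr rfl fun k _ => Finset.sum_congr rfl fun l _ => by ring

lemma unitary_dot_preserved {U : Matrix n n ℂ} (hU : U ∈ Matrix.unitaryGroup n ℂ) (z : n → ℂ) :
    star (U *ᵥ z) ⬝ᵥ (U *ᵥ z) = star z ⬝ᵥ z := by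
  have h1 : Uᴴ * U = 1 := by
    rw [← Matrix.star_eq_conjTranspose]; exact (Matrix.mem_unitaryGroup_iff').mp hU
  rw [Matrix.star_mulVec, ← Matrix.dotProduct_mulVec, Matrix.mulVec_mulVec, h1,
    Matrix.one_mulVec]

lemma smul_dot_self (r : ℝ) (z : n → ℂ) :
    star ((r : ℂ) • z) ⬝ᵥ ((r : ℂ) • z) = ((r ^ 2 : ℝ) : ℂ) * (star z ⬝ᵥ z) := by
  simp only [star_smul, smul_dotProduct, dotProduct_smul, smul_eq_mul,
    Complex.star_def, Complex.conj_ofReal]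
  push_cast
  ring

lemma dot_self_diff_re_le (y y' : n → ℂ) (hy : star y ⬝ᵥ y = 1) (hy' : star y' ⬝ᵥ y' = 1) :
    (star (y - y') ⬝ᵥ (y - y')).re ≤ 4 := by
  set Y : EuclideanSpace ℂ n := (WithLp.equiv 2 (n → ℂ)).symm y with hY
  set Y' : EuclideanSpace ℂ n := (WithLp.equiv 2 (n → ℂ)).symm y' with hY'
  have h1 : star (y - y') ⬝ᵥ (y - y') = inner ℂ (Y - Y') (Y - Y') := by
    rw [dotProduct_comm]; rfl
  have hnY : ‖Y‖ = 1 := by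
    rw [norm_eq_sqrt_re_inner (𝕜 := ℂ)]
    rw [show (inner ℂ Y Y : ℂ) = star y ⬝ᵥ y by rw [dotProduct_comm]; rfl, hy]
    simp
  have hnY' : ‖Y'‖ = 1 := by
    rw [norm_eq_sqrt_re_inner (𝕜 := ℂ)]
    rw [show (inner ℂ Y' Y' : ℂ) = star y' ⬝ᵥ y' by rw [dotProduct_comm]; rfl, hy']
    simp
  rw [h1]
  have hre : (inner ℂ (Y - Y') (Y - Y') : ℂ).re = ‖Y - Y'‖ ^ 2 := by
    simpa using inner_self_eq_norm_sq (𝕜 := ℂ) (Y - Y')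
  rw [hre]
  have h2 : ‖Y - Y'‖ ≤ 2 := by
    calc ‖Y - Y'‖ ≤ ‖Y‖ + ‖Y'‖ := norm_sub_le _ _
      _ = 2 := by rw [hnY, hnY']; norm_num
  nlinarith [norm_nonneg (Y - Y')]

lemma tn_term (r : ℝ) (z w : n → ℂ) (d c : ℝ) (hd : 0 ≤ d) (hc : 0 ≤ c)
    (hz : (star z ⬝ᵥ z).re ≤ d ^ 2) (hw : (star w ⬝ᵥ w).re ≤ c ^ 2) :
    traceNorm (vecMulVec ((r : ℂ) • z) (star w)) ≤ |r| * d * c := by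
  refine (traceNorm_vecMulVec_le _ _).trans ?_
  rw [smul_dot_self, Complex.re_ofReal_mul]
  have h1 : Real.sqrt (r ^ 2 * (star z ⬝ᵥ z).re) ≤ |r| * d := by
    rw [Real.sqrt_mul (sq_nonneg r), Real.sqrt_sq_eq_abs]
    exact mul_le_mul_of_nonneg_left
      ((Real.sqrt_le_sqrt hz).trans (le_of_eq (Real.sqrt_sq hd))) (abs_nonneg r)
  have h2 : Real.sqrt ((star w ⬝ᵥ w).re) ≤ c :=
    (Real.sqrt_le_sqrt hw).trans (le_of_eq (Real.sqrt_sq hc))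
  calc Real.sqrt (r ^ 2 * (star z ⬝ᵥ z).re) * Real.sqrt ((star w ⬝ᵥ w).re)
      ≤ (|r| * d) * c := mul_le_mul h1 h2 (Real.sqrt_nonneg _) (by positivity)
    _ = |r| * d * c := by ring


end Helpers

/-- One-query hybrid bound: for `|φ⟩ = √(1−α)|u⟩ + √α|v⟩` with `u ⊥ v` unit
vectors, and unitaries `U, U'` agreeing on `|u⟩`,
`‖U|φ⟩⟨φ|U† − U'|φ⟩⟨φ|U'†‖₁ ≤ 2(α + 2√(α(1−α))) ≤ 6√α`. -/
theorem one_query_hybrid_bound {n : Type*} [Fintype n] [DecidableEq n]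
    (α : ℝ) (hα0 : 0 ≤ α) (hα1 : α ≤ 1)
    (u v : n → ℂ) (hu : star u ⬝ᵥ u = 1) (hv : star v ⬝ᵥ v = 1)
    (huv : star u ⬝ᵥ v = 0)
    (U U' : Matrix n n ℂ)
    (hU : U ∈ Matrix.unitaryGroup n ℂ) (hU' : U' ∈ Matrix.unitaryGroup n ℂ)
    (hagree : U.mulVec u = U'.mulVec u)
    (φ : n → ℂ)
    (hφ : φ = (Real.sqrt (1 - α) : ℂ) • u + (Real.sqrt α : ℂ) • v) :
    traceNorm (U * Matrix.vecMulVec φ (star φ) * Uᴴ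
        - U' * Matrix.vecMulVec φ (star φ) * U'ᴴ)
      ≤ 2 * (α + 2 * Real.sqrt (α * (1 - α))) ∧
    2 * (α + 2 * Real.sqrt (α * (1 - α))) ≤ 6 * Real.sqrt α := by
  have ha0 : (0:ℝ) ≤ Real.sqrt (1 - α) := Real.sqrt_nonneg _
  have hb0 : (0:ℝ) ≤ Real.sqrt α := Real.sqrt_nonneg _
  set a : ℝ := Real.sqrt (1 - α) with haa
  set b : ℝ := Real.sqrt α with hbb
  have hab : Real.sqrt (α * (1 - α)) = a * b := by
    rw [Real.sqrt_mul hα0, haa, hbb]; ring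
  have hb2 : b ^ 2 = α := Real.sq_sqrt hα0
  constructor
  · -- main bound
    set x := U *ᵥ u with hx
    set y := U *ᵥ v with hy
    set y' := U' *ᵥ v with hy'
    have hUφ : U *ᵥ φ = (a : ℂ) • x + (b : ℂ) • y := by
      rw [hφ, Matrix.mulVec_add, Matrix.mulVec_smul, Matrix.mulVec_smul]
    have hU'φ : U' *ᵥ φ = (a : ℂ) • x + (b : ℂ) • y' := by
      rw [hφ, Matrix.mulVec_add, Matrix.mulVec_smul, Matrix.mulVec_smul, ← hagree, ← hy']
    have hD : U * Matrix.vecMulVec φ (star φ) * Uᴴ - U' * Matrix.vecMulVec φ (star φ) * U'ᴴ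
        = vecMulVec (((a * b : ℝ) : ℂ) • x) (star (y - y'))
          + vecMulVec (((a * b : ℝ) : ℂ) • (y - y')) (star x)
          + vecMulVec (((α : ℝ) : ℂ) • y) (star y)
          + vecMulVec (((-α : ℝ) : ℂ) • y') (star y') := by
      rw [conj_vecMulVec, conj_vecMulVec, hUφ, hU'φ]
      ext i j
      have hαc : ((α : ℝ) : ℂ) = (b : ℂ) * (b : ℂ) := by
        rw [← hb2]; push_cast; ring
      simp only [Matrix.sub_apply, Matrix.add_apply, vecMulVec_apply, Pi.add_apply,
        Pi.sub_apply, Pi.smul_apply, Pi.star_apply, smul_eq_mul, star_add, star_sub,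
        star_mul', star_smul, Complex.star_def, _root_.map_add, _root_.map_sub, _root_.map_mul,
        Complex.conj_ofReal, hαc]
      push_cast
      rw [hαc]
      ring
    have hP : (Matrix.vecMulVec φ (star φ)).IsHermitian := by
      ext i j
      simp only [conjTranspose_apply, vecMulVec_apply, Pi.star_apply, star_mul', star_star]
      ring
    have hHerm : (U * Matrix.vecMulVec φ (star φ) * Uᴴ
        - U' * Matrix.vecMulVec φ (star φ) * U'ᴴ).IsHermitian :=
      (Matrix.isHermitian_mul_mul_conjTranspose U hP).sub
        (Matrix.isHermitian_mul_mul_conjTranspose U' hP)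
    rw [hD] at hHerm ⊢
    refine (traceNorm_add4_le hHerm).trans ?_
    -- unit norms
    have hxx : star x ⬝ᵥ x = 1 := by rw [hx, unitary_dot_preserved hU, hu]
    have hyy : star y ⬝ᵥ y = 1 := by rw [hy, unitary_dot_preserved hU, hv]
    have hy'y' : star y' ⬝ᵥ y' = 1 := by rw [hy', unitary_dot_preserved hU', hv]
    have hxx1 : (star x ⬝ᵥ x).re ≤ 1 ^ 2 := by rw [hxx]; norm_num
    have hyy1 : (star y ⬝ᵥ y).re ≤ 1 ^ 2 := by rw [hyy]; norm_num
    have hy'y'1 : (star y' ⬝ᵥ y').re ≤ 1 ^ 2 := by rw [hy'y']; norm_num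
    have hww : (star (y - y') ⬝ᵥ (y - y')).re ≤ 2 ^ 2 := by
      exact (dot_self_diff_re_le y y' hyy hy'y').trans (by norm_num)
    have T1 := tn_term (a * b) x (y - y') 1 2 zero_le_one (by norm_num) hxx1 hww
    have T2 := tn_term (a * b) (y - y') x 2 1 (by norm_num) zero_le_one hww hxx1
    have T3 := tn_term α y y 1 1 zero_le_one zero_le_one hyy1 hyy1
    have T4 := tn_term (-α) y' y' 1 1 zero_le_one zero_le_one hy'y'1 hy'y'1
    rw [abs_of_nonneg (mul_nonneg ha0 hb0)] at T1 T2
    rw [abs_of_nonneg hα0] at T3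
    rw [abs_neg, abs_of_nonneg hα0] at T4
    calc traceNorm _ + traceNorm _ + traceNorm _ + traceNorm _
        ≤ (a * b * 1 * 2) + (a * b * 2 * 1) + (α * 1 * 1) + (α * 1 * 1) :=
          add_le_add (add_le_add (add_le_add T1 T2) T3) T4
      _ = 2 * (α + 2 * (a * b)) := by ring
      _ = 2 * (α + 2 * Real.sqrt (α * (1 - α))) := by rw [hab]
  · -- numeric bound
    have h1 : b * b = α := by rw [hbb]; exact Real.mul_self_sqrt hα0
    have h2 : Real.sqrt (α * (1 - α)) ≤ b := by
      rw [hbb]; exact Real.sqrt_le_sqrt (by nlinarith)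
    have h3 : b ≤ 1 := by nlinarith [sq_nonneg (b - 1)]
    nlinarith [Real.sqrt_nonneg (α * (1 - α)), hb0]
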